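/- Let X be an infinite set, p ∈ X, and equip X with the particular point topology: a subset U ⊆ X is open if and only if U = ∅ or p ∈ U. Then X with this topology is not T-locally compact. -/
import Mathlib


def TLocallyCompact (X : Type*) [TopologicalSpace X] : Prop :=
  ∀ (x : X) (U : Set X), IsOpen U → x ∈ U →
    ∃ V : Set X, IsOpen V ∧ x ∈ V ∧ V ⊆ U ∧ IsCompact (frontier V)

theorem particularPoint_not_tLocallyCompact (X : Type*) [TopologicalSpace X]
    (hX : Infinite X) (p : X) (h : ∀ U : Set X, IsOpen U ↔ U = ∅ ∨ p ∈ U) :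
    ¬ TLocallyCompact X := by
  intro hTLC
  obtain ⟨V, hVopen, hpV, hVsub, hcomp⟩ := hTLC p {p} ((h {p}).2 (Or.inr rfl)) rfl
  have hV : V = {p} := le_antisymm hVsub (by simpa using hpV)
  subst hV
  have hclo : closure ({p} : Set X) = Set.univ := by
    ext x
    simp only [Set.mem_univ, iff_true, mem_closure_iff]
    intro o ho hxo
    rcases (h o).1 ho with rfl | hpo
    · exact absurd hxo (Set.notMem_empty x)
    · exact ⟨p, hpo, rfl⟩
  have hfr : frontier ({p} : Set X) = {p}ᶜ := by
    rw [frontier, hclo, hVopen.interior_eq]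
    ext x; simp
  rw [hfr] at hcomp
  obtain ⟨s, hs⟩ := hcomp.elim_finite_subcover (fun y : X => {p, y})
    (fun y => (h _).2 (Or.inr (Set.mem_insert _ _)))
    (fun x _ => Set.mem_iUnion.2 ⟨x, Set.mem_insert_of_mem _ rfl⟩)
  have hinf : ({p}ᶜ : Set X).Infinite := (Set.finite_singleton p).infinite_compl
  have hfin : (⋃ y ∈ s, ({p, y} : Set X)).Finite :=
    s.finite_toSet.biUnion fun y _ => (Set.finite_singleton y).insert p
  exact hinf (hfin.subset hs)
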